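/- arXiv:1711.05037 — 4 statements merged into one kernel-verified Lean document; each statement's English description precedes it below -/
import Mathlib

section
/- Assume (h_k(x) − y)^2 ≤ M for all k ∈ [p] and all (x,y) ∈ 𝒳 × 𝒴. For every (x,y) the squared loss of the distribution weighted combination decomposes as (h_z^η(x) − y)^2 = f_z(x,y) − g_z(x), where f_z(x,y) = (h_z^η(x) − y)^2 − 2M log K_z(x) and g_z(x) = −2M log K_z(x), and for every fixed (x,y) both z ↦ f_z(x,y) and z ↦ g_z(x) are convex functions of z on the simplex Δ. -/
open Finset Real

/-- Marginal distribution on `X` of a joint distribution on `X × Y`. -/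
noncomputable def marginal {X Y : Type*} [Fintype Y] (D : X → Y → ℝ) (x : X) : ℝ :=
  ∑ y, D x y

/-- Expected loss `𝓛(D, h) = Σ_{(x,y)} D(x,y) L(h(x), y)`. -/
noncomputable def expLoss {X Y : Type*} [Fintype X] [Fintype Y]
    (L : ℝ → ℝ → ℝ) (yval : Y → ℝ) (D : X → Y → ℝ) (h : X → ℝ) : ℝ :=
  ∑ x, ∑ y, D x y * L (h x) (yval y)

/-- The uniform distribution value `𝒰(x) = 1/|X|` on a finite set `X`. -/
noncomputable def unif (X : Type*) [Fintype X] : ℝ :=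
  (Fintype.card X : ℝ)⁻¹

/-- The distribution weighted combining rule `h_z^η`. -/
noncomputable def combRule {X Y : Type*} [Fintype X] [Fintype Y] {p : ℕ}
    (D : Fin p → X → Y → ℝ) (h : Fin p → X → ℝ) (η : ℝ) (z : Fin p → ℝ) (x : X) : ℝ :=
  ∑ k, ((z k * marginal (D k) x + η * unif X / (p : ℝ)) /
        ((∑ j, z j * marginal (D j) x) + η * unif X)) * h k x

/-- Exponentiated Rényi divergence `d_α(D ∥ D')` of joint distributions. -/
noncomputable def renyi {X Y : Type*} [Fintype X] [Fintype Y] (α : ℝ)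
    (D D' : X → Y → ℝ) : ℝ :=
  (∑ x, ∑ y, D x y ^ α / D' x y ^ (α - 1)) ^ (α - 1)⁻¹

/-- Exponentiated Rényi divergence of distributions on `Y`. -/
noncomputable def renyiY {Y : Type*} [Fintype Y] (α : ℝ) (q q' : Y → ℝ) : ℝ :=
  (∑ y, q y ^ α / q' y ^ (α - 1)) ^ (α - 1)⁻¹

open Set

/-- 1-D key lemma: `t ↦ ((a+bt)/(c+dt))² − 2M log(c+dt)` is convex on `[0,1]`
provided `c+dt > 0` and `(a+bt)² ≤ M (c+dt)²` there. -/
lemma aux1 (a b c d M : ℝ) (hM : 0 ≤ M)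
    (hK : ∀ t ∈ Icc (0:ℝ) 1, 0 < c + d * t)
    (hu : ∀ t ∈ Icc (0:ℝ) 1, (a + b * t) ^ 2 ≤ M * (c + d * t) ^ 2) :
    ConvexOn ℝ (Icc (0:ℝ) 1)
      (fun t => ((a + b * t) / (c + d * t)) ^ 2 - 2 * M * Real.log (c + d * t)) := by
  have hKne : ∀ t ∈ Icc (0:ℝ) 1, c + d * t ≠ 0 := fun t ht => (hK t ht).ne'
  set e : ℝ := b * c - a * d with he
  apply convexOn_of_hasDerivWithinAt2_nonneg (convex_Icc 0 1)
    (f' := fun t => 2 * e * (a + b * t) / (c + d * t) ^ 3 - 2 * M * d / (c + d * t))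
    (f'' := fun t => 2 * e * (b * (c + d * t) - 3 * (a + b * t) * d) / (c + d * t) ^ 4
      + 2 * M * d ^ 2 / (c + d * t) ^ 2)
  · have hKc : ContinuousOn (fun t : ℝ => c + d * t) (Icc 0 1) := by fun_prop
    have huc : ContinuousOn (fun t : ℝ => a + b * t) (Icc 0 1) := by fun_prop
    exact ((huc.div hKc hKne).pow 2).sub (continuousOn_const.mul (hKc.log hKne))
  · rw [interior_Icc]
    intro t ht
    have hKt := hK t (Ioo_subset_Icc_self ht)
    have h1 : HasDerivAt (fun t : ℝ => c + d * t) d t := by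
      simpa using ((hasDerivAt_id t).const_mul d).const_add c
    have h2 : HasDerivAt (fun t : ℝ => a + b * t) b t := by
      simpa using ((hasDerivAt_id t).const_mul b).const_add a
    have h5 := ((h2.div h1 hKt.ne').pow 2).sub ((h1.log hKt.ne').const_mul (2 * M))
    refine HasDerivAt.hasDerivWithinAt ?_
    convert h5 using 1
    · rfl
    norm_num only [Pi.div_apply, Pi.pow_apply]
    field_simp
    ring
  · rw [interior_Icc]
    intro t ht
    have hKt := hK t (Ioo_subset_Icc_self ht)
    have h1 : HasDerivAt (fun t : ℝ => c + d * t) d t := by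
      simpa using ((hasDerivAt_id t).const_mul d).const_add c
    have h2 : HasDerivAt (fun t : ℝ => a + b * t) b t := by
      simpa using ((hasDerivAt_id t).const_mul b).const_add a
    have h6 := ((h2.const_mul (2 * e)).div (h1.pow 3) (pow_ne_zero 3 hKt.ne')).sub
      ((hasDerivAt_const t (2 * M * d)).div h1 hKt.ne')
    refine HasDerivAt.hasDerivWithinAt ?_
    convert h6 using 1
    · rfl
    norm_num only [Pi.div_apply, Pi.pow_apply]
    field_simp
    ring
  · rw [interior_Icc]
    intro t ht
    have hKt := hK t (Ioo_subset_Icc_self ht)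
    have hu2 := hu t (Ioo_subset_Icc_self ht)
    have heq : 2 * e * (b * (c + d * t) - 3 * (a + b * t) * d) / (c + d * t) ^ 4
        + 2 * M * d ^ 2 / (c + d * t) ^ 2
        = (2 * e * (b * (c + d * t) - 3 * (a + b * t) * d)
            + 2 * M * d ^ 2 * (c + d * t) ^ 2) / (c + d * t) ^ 4 := by
      field_simp
    rw [heq]
    apply div_nonneg _ (by positivity)
    rw [he]
    nlinarith [sq_nonneg ((b * c - a * d) - (a + b * t) * d),
      mul_nonneg (sq_nonneg d) (sub_nonneg.2 hu2)]

/-- Variant: `t ↦ −2M log(c+dt)` is convex on `[0,1]`. -/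
lemma aux2 (c d M : ℝ) (hM : 0 ≤ M)
    (hK : ∀ t ∈ Icc (0:ℝ) 1, 0 < c + d * t) :
    ConvexOn ℝ (Icc (0:ℝ) 1) (fun t => -(2 * M * Real.log (c + d * t))) := by
  have h := aux1 0 0 c d M hM hK (fun t ht => by
    have := hK t ht
    have h0 : ((0:ℝ) + 0 * t) ^ 2 = 0 := by ring
    rw [h0]; positivity)
  refine h.congr fun t ht => ?_
  simp

/-- Convexity on a convex set, via affine `u, K`, of `z ↦ (u z / K z)² − 2M log (K z)`. -/
lemma seg_convex {n : ℕ} (K u : (Fin n → ℝ) → ℝ) (S : Set (Fin n → ℝ)) (hS : Convex ℝ S)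
    (M : ℝ) (hM : 0 ≤ M)
    (hKaff : ∀ z1 z2 : Fin n → ℝ, ∀ s t : ℝ, s + t = 1 →
      K (s • z1 + t • z2) = s * K z1 + t * K z2)
    (huaff : ∀ z1 z2 : Fin n → ℝ, ∀ s t : ℝ, s + t = 1 →
      u (s • z1 + t • z2) = s * u z1 + t * u z2)
    (hKpos : ∀ z ∈ S, 0 < K z)
    (hbound : ∀ z ∈ S, (u z) ^ 2 ≤ M * (K z) ^ 2) :
    ConvexOn ℝ S (fun z => (u z / K z) ^ 2 - 2 * M * Real.log (K z)) := by
  refine ⟨hS, ?_⟩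
  intro z1 hz1 z2 hz2 α β hα hβ hαβ
  have hwmem : ∀ t ∈ Icc (0:ℝ) 1, (1 - t) • z1 + t • z2 ∈ S := fun t ht =>
    hS hz1 hz2 (by linarith [ht.2]) ht.1 (by ring)
  have hKt : ∀ t ∈ Icc (0:ℝ) 1, K ((1 - t) • z1 + t • z2) = K z1 + (K z2 - K z1) * t := by
    intro t _
    rw [hKaff z1 z2 (1 - t) t (by ring)]; ring
  have hut : ∀ t ∈ Icc (0:ℝ) 1, u ((1 - t) • z1 + t • z2) = u z1 + (u z2 - u z1) * t := by
    intro t _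
    rw [huaff z1 z2 (1 - t) t (by ring)]; ring
  have key := aux1 (u z1) (u z2 - u z1) (K z1) (K z2 - K z1) M hM
    (fun t ht => by rw [← hKt t ht]; exact hKpos _ (hwmem t ht))
    (fun t ht => by rw [← hKt t ht, ← hut t ht]; exact hbound _ (hwmem t ht))
  have h0 : (0:ℝ) ∈ Icc (0:ℝ) 1 := by norm_num
  have h1 : (1:ℝ) ∈ Icc (0:ℝ) 1 := by norm_num
  have hineq := key.2 h0 h1 hα hβ hαβ
  have hβmem : β ∈ Icc (0:ℝ) 1 := ⟨hβ, by linarith⟩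
  have hcomb : α • z1 + β • z2 = (1 - β) • z1 + β • z2 := by
    have : α = 1 - β := by linarith
    rw [this]
  have eβ : α • (0:ℝ) + β • (1:ℝ) = β := by simp
  rw [eβ] at hineq
  simp only [smul_eq_mul] at hineq ⊢
  calc (u (α • z1 + β • z2) / K (α • z1 + β • z2)) ^ 2
        - 2 * M * Real.log (K (α • z1 + β • z2))
      = ((u z1 + (u z2 - u z1) * β) / (K z1 + (K z2 - K z1) * β)) ^ 2
        - 2 * M * Real.log (K z1 + (K z2 - K z1) * β) := by
        rw [hcomb, hKt β hβmem, hut β hβmem]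
    _ ≤ α * (((u z1 + (u z2 - u z1) * 0) / (K z1 + (K z2 - K z1) * 0)) ^ 2
          - 2 * M * Real.log (K z1 + (K z2 - K z1) * 0))
        + β * (((u z1 + (u z2 - u z1) * 1) / (K z1 + (K z2 - K z1) * 1)) ^ 2
          - 2 * M * Real.log (K z1 + (K z2 - K z1) * 1)) := hineq
    _ = α * ((u z1 / K z1) ^ 2 - 2 * M * Real.log (K z1))
        + β * ((u z2 / K z2) ^ 2 - 2 * M * Real.log (K z2)) := by
        have e1 : u z1 + (u z2 - u z1) * 0 = u z1 := by ring
        have e2 : K z1 + (K z2 - K z1) * 0 = K z1 := by ring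
        have e3 : u z1 + (u z2 - u z1) * 1 = u z2 := by ring
        have e4 : K z1 + (K z2 - K z1) * 1 = K z2 := by ring
        rw [e1, e2, e3, e4]

/-- Convexity on a convex set of `z ↦ −2M log (K z)` for affine positive `K`. -/
lemma seg_convex' {n : ℕ} (K : (Fin n → ℝ) → ℝ) (S : Set (Fin n → ℝ)) (hS : Convex ℝ S)
    (M : ℝ) (hM : 0 ≤ M)
    (hKaff : ∀ z1 z2 : Fin n → ℝ, ∀ s t : ℝ, s + t = 1 →
      K (s • z1 + t • z2) = s * K z1 + t * K z2)
    (hKpos : ∀ z ∈ S, 0 < K z) :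
    ConvexOn ℝ S (fun z => -(2 * M * Real.log (K z))) := by
  refine ⟨hS, ?_⟩
  intro z1 hz1 z2 hz2 α β hα hβ hαβ
  have hwmem : ∀ t ∈ Icc (0:ℝ) 1, (1 - t) • z1 + t • z2 ∈ S := fun t ht =>
    hS hz1 hz2 (by linarith [ht.2]) ht.1 (by ring)
  have hKt : ∀ t ∈ Icc (0:ℝ) 1, K ((1 - t) • z1 + t • z2) = K z1 + (K z2 - K z1) * t := by
    intro t _
    rw [hKaff z1 z2 (1 - t) t (by ring)]; ring
  have key := aux2 (K z1) (K z2 - K z1) M hM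
    (fun t ht => by rw [← hKt t ht]; exact hKpos _ (hwmem t ht))
  have h0 : (0:ℝ) ∈ Icc (0:ℝ) 1 := by norm_num
  have h1 : (1:ℝ) ∈ Icc (0:ℝ) 1 := by norm_num
  have hineq := key.2 h0 h1 hα hβ hαβ
  have hβmem : β ∈ Icc (0:ℝ) 1 := ⟨hβ, by linarith⟩
  have hcomb : α • z1 + β • z2 = (1 - β) • z1 + β • z2 := by
    have : α = 1 - β := by linarith
    rw [this]
  have eβ : α • (0:ℝ) + β • (1:ℝ) = β := by simp
  rw [eβ] at hineq
  simp only [smul_eq_mul] at hineq ⊢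
  calc -(2 * M * Real.log (K (α • z1 + β • z2)))
      = -(2 * M * Real.log (K z1 + (K z2 - K z1) * β)) := by rw [hcomb, hKt β hβmem]
    _ ≤ α * (-(2 * M * Real.log (K z1 + (K z2 - K z1) * 0)))
        + β * (-(2 * M * Real.log (K z1 + (K z2 - K z1) * 1))) := hineq
    _ = α * (-(2 * M * Real.log (K z1))) + β * (-(2 * M * Real.log (K z2))) := by
        have e2 : K z1 + (K z2 - K z1) * 0 = K z1 := by ring
        have e4 : K z1 + (K z2 - K z1) * 1 = K z2 := by ring
        rw [e2, e4]

/-- Jensen bound for a convex combination. -/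
lemma comb_bound {n : ℕ} (w v : Fin n → ℝ) (M : ℝ)
    (hw0 : ∀ k, 0 ≤ w k) (hw1 : ∑ k, w k = 1) (hv : ∀ k, (v k) ^ 2 ≤ M) :
    (∑ k, w k * v k) ^ 2 ≤ M := by
  have h2 : ConvexOn ℝ Set.univ (fun s : ℝ => s ^ 2) := (by norm_num : Even 2).convexOn_pow
  have hJ := h2.map_sum_le (t := Finset.univ) (w := w) (p := v)
    (fun k _ => hw0 k) hw1 (fun k _ => Set.mem_univ _)
  simp only [smul_eq_mul] at hJ
  calc (∑ k, w k * v k) ^ 2 ≤ ∑ k, w k * (v k) ^ 2 := hJ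
    _ ≤ ∑ k, w k * M := Finset.sum_le_sum fun k _ =>
        mul_le_mul_of_nonneg_left (hv k) (hw0 k)
    _ = M := by rw [← Finset.sum_mul, hw1, one_mul]

/-- Proposition (DC decomposition of the squared loss): for every `(x, y)`,
`(h_z^η(x) − y)² = f_z(x,y) − g_z(x)` with
`f_z(x,y) = (h_z^η(x) − y)² − 2M log K_z(x)` and `g_z(x) = −2M log K_z(x)`,
and both `z ↦ f_z(x,y)` and `z ↦ g_z(x)` are convex on the simplex. -/
theorem stmt5
    {X Y : Type*} [Fintype X] [Nonempty X] [Fintype Y] [Nonempty Y]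
    {p : ℕ} (hp : 0 < p)
    (D : Fin p → X → Y → ℝ)
    (hDnonneg : ∀ k x y, 0 ≤ D k x y)
    (hDsum : ∀ k, ∑ x, ∑ y, D k x y = 1)
    (h : Fin p → X → ℝ) (yval : Y → ℝ)
    (η : ℝ) (hη : 0 < η)
    (M : ℝ)
    (hM : ∀ k x y, (h k x - yval y) ^ 2 ≤ M) :
    ∀ (x : X) (y : Y),
      (∀ z ∈ stdSimplex ℝ (Fin p),
        (combRule D h η z x - yval y) ^ 2 =
          ((combRule D h η z x - yval y) ^ 2 -
              2 * M * Real.log ((∑ k, z k * marginal (D k) x) + η * unif X)) -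
            (-(2 * M * Real.log ((∑ k, z k * marginal (D k) x) + η * unif X)))) ∧
      ConvexOn ℝ (stdSimplex ℝ (Fin p)) (fun z =>
        (combRule D h η z x - yval y) ^ 2 -
          2 * M * Real.log ((∑ k, z k * marginal (D k) x) + η * unif X)) ∧
      ConvexOn ℝ (stdSimplex ℝ (Fin p)) (fun z =>
        -(2 * M * Real.log ((∑ k, z k * marginal (D k) x) + η * unif X))) := by
  intro x y
  have hm : ∀ k, 0 ≤ marginal (D k) x := fun k => Finset.sum_nonneg fun y' _ => hDnonneg k x y'
  have hcard : (0:ℝ) < (Fintype.card X : ℝ) := by exact_mod_cast Fintype.card_pos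
  have hU : 0 < η * unif X := by
    unfold unif
    positivity
  have hM0 : 0 ≤ M := le_trans (sq_nonneg _) (hM ⟨0, hp⟩ x y)
  have hpne : (p:ℝ) ≠ 0 := Nat.cast_ne_zero.2 hp.ne'
  -- Positivity of the denominator on the simplex
  have hKpos : ∀ z ∈ stdSimplex ℝ (Fin p),
      0 < (∑ k, z k * marginal (D k) x) + η * unif X := by
    intro z hz
    have h1 : 0 ≤ ∑ k, z k * marginal (D k) x :=
      Finset.sum_nonneg fun k _ => mul_nonneg (hz.1 k) (hm k)
    linarith
  -- Affinity of K
  have hKaff : ∀ z1 z2 : Fin p → ℝ, ∀ s t : ℝ, s + t = 1 →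
      (∑ k, (s • z1 + t • z2) k * marginal (D k) x) + η * unif X
        = s * ((∑ k, z1 k * marginal (D k) x) + η * unif X)
          + t * ((∑ k, z2 k * marginal (D k) x) + η * unif X) := by
    intro z1 z2 s t hst
    simp only [Pi.add_apply, Pi.smul_apply, smul_eq_mul]
    rw [show ∑ k, (s * z1 k + t * z2 k) * marginal (D k) x
        = s * ∑ k, z1 k * marginal (D k) x + t * ∑ k, z2 k * marginal (D k) x from by
      rw [Finset.mul_sum, Finset.mul_sum, ← Finset.sum_add_distrib]
      exact Finset.sum_congr rfl fun k _ => by ring]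
    linear_combination (-(η * unif X)) * hst
  -- Affinity of J
  have hJaff : ∀ z1 z2 : Fin p → ℝ, ∀ s t : ℝ, s + t = 1 →
      (∑ k, ((s • z1 + t • z2) k * marginal (D k) x + η * unif X / p) * h k x)
        = s * (∑ k, (z1 k * marginal (D k) x + η * unif X / p) * h k x)
          + t * (∑ k, (z2 k * marginal (D k) x + η * unif X / p) * h k x) := by
    intro z1 z2 s t hst
    rw [Finset.mul_sum, Finset.mul_sum, ← Finset.sum_add_distrib]
    refine Finset.sum_congr rfl fun k _ => ?_
    simp only [Pi.add_apply, Pi.smul_apply, smul_eq_mul]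
    linear_combination (-(η * unif X / p * h k x)) * hst
  -- Affinity of u := J - y K
  have huaff : ∀ z1 z2 : Fin p → ℝ, ∀ s t : ℝ, s + t = 1 →
      ((∑ k, ((s • z1 + t • z2) k * marginal (D k) x + η * unif X / p) * h k x)
          - yval y * ((∑ k, (s • z1 + t • z2) k * marginal (D k) x) + η * unif X))
        = s * ((∑ k, (z1 k * marginal (D k) x + η * unif X / p) * h k x)
            - yval y * ((∑ k, z1 k * marginal (D k) x) + η * unif X))
          + t * ((∑ k, (z2 k * marginal (D k) x + η * unif X / p) * h k x)
            - yval y * ((∑ k, z2 k * marginal (D k) x) + η * unif X)) := by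
    intro z1 z2 s t hst
    rw [hJaff z1 z2 s t hst, hKaff z1 z2 s t hst]
    ring
  -- weights sum to one
  have hw1 : ∀ z ∈ stdSimplex ℝ (Fin p),
      ∑ k, (z k * marginal (D k) x + η * unif X / p)
          / ((∑ j, z j * marginal (D j) x) + η * unif X) = 1 := by
    intro z hz
    rw [← Finset.sum_div, div_eq_one_iff_eq (hKpos z hz).ne', Finset.sum_add_distrib,
      Finset.sum_const, Finset.card_univ, Fintype.card_fin, nsmul_eq_mul]
    field_simp
  -- representation of the combining rule
  have hcombrep : ∀ z ∈ stdSimplex ℝ (Fin p),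
      combRule D h η z x - yval y
        = ((∑ k, (z k * marginal (D k) x + η * unif X / p) * h k x)
            - yval y * ((∑ k, z k * marginal (D k) x) + η * unif X))
          / ((∑ k, z k * marginal (D k) x) + η * unif X) := by
    intro z hz
    have hKz := hKpos z hz
    have h1 : combRule D h η z x
        = (∑ k, (z k * marginal (D k) x + η * unif X / p) * h k x)
          / ((∑ k, z k * marginal (D k) x) + η * unif X) := by
      unfold combRule
      rw [Finset.sum_div]
      exact Finset.sum_congr rfl fun k _ => by ring
    rw [h1, eq_div_iff hKz.ne', sub_mul, div_mul_cancel₀ _ hKz.ne']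
  -- boundedness
  have hbound : ∀ z ∈ stdSimplex ℝ (Fin p),
      ((∑ k, (z k * marginal (D k) x + η * unif X / p) * h k x)
          - yval y * ((∑ k, z k * marginal (D k) x) + η * unif X)) ^ 2
        ≤ M * ((∑ k, z k * marginal (D k) x) + η * unif X) ^ 2 := by
    intro z hz
    have hKz := hKpos z hz
    have hrep : combRule D h η z x - yval y
        = ∑ k, ((z k * marginal (D k) x + η * unif X / p)
            / ((∑ j, z j * marginal (D j) x) + η * unif X)) * (h k x - yval y) := by
      unfold combRule
      simp only [mul_sub]
      rw [Finset.sum_sub_distrib, ← Finset.sum_mul, hw1 z hz, one_mul]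
    have hb : (combRule D h η z x - yval y) ^ 2 ≤ M := by
      rw [hrep]
      refine comb_bound _ _ M (fun k => ?_) (hw1 z hz) (fun k => hM k x y)
      have h1 := hz.1 k
      have h2 := hm k
      have h3 := hU.le
      exact div_nonneg (by positivity) hKz.le
    rw [hcombrep z hz, div_pow] at hb
    exact (div_le_iff₀ (by positivity)).1 hb
  refine ⟨fun z hz => by ring, ?_, ?_⟩
  · refine ConvexOn.congr (seg_convex
      (fun z => (∑ k, z k * marginal (D k) x) + η * unif X)
      (fun z => (∑ k, (z k * marginal (D k) x + η * unif X / p) * h k x)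
        - yval y * ((∑ k, z k * marginal (D k) x) + η * unif X))
      (stdSimplex ℝ (Fin p)) (convex_stdSimplex ℝ (Fin p)) M hM0
      hKaff huaff hKpos hbound) ?_
    intro z hz
    dsimp only
    rw [hcombrep z hz]
  · exact seg_convex'
      (fun z => (∑ k, z k * marginal (D k) x) + η * unif X)
      (stdSimplex ℝ (Fin p)) (convex_stdSimplex ℝ (Fin p)) M hM0 hKaff hKpos
end

section
/- Let D_T and D be probability distributions on the finite set 𝒳 × 𝒴 with D(x,y) > 0 wherever D_T(x,y) > 0, let h : 𝒳 → ℝ be any hypothesis with L(h(x), y) ≤ M for all (x,y), and let α > 1. Then 𝓛(D_T, h) ≤ [d_α(D_T ∥ D) · 𝓛(D, h)]^{(α−1)/α} · M^{1/α}. -/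
open Finset Real

/-- Hölder-inequality step: for distributions `D_T, D` with `D > 0` on the support of
`D_T`, a hypothesis with `L(h(x), y) ≤ M`, and `α > 1`,
`𝓛(D_T, h) ≤ [d_α(D_T ∥ D) 𝓛(D, h)]^{(α−1)/α} M^{1/α}`. -/
theorem stmt7
    {X Y : Type*} [Fintype X] [Nonempty X] [Fintype Y] [Nonempty Y]
    (DT D : X → Y → ℝ)
    (hDTnonneg : ∀ x y, 0 ≤ DT x y)
    (hDTsum : ∑ x, ∑ y, DT x y = 1)
    (hDnonneg : ∀ x y, 0 ≤ D x y)
    (hDsum : ∑ x, ∑ y, D x y = 1)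
    (hsupp : ∀ x y, 0 < DT x y → 0 < D x y)
    (h : X → ℝ) (yval : Y → ℝ)
    (L : ℝ → ℝ → ℝ)
    (hLnonneg : ∀ a b, 0 ≤ L a b)
    (M : ℝ)
    (hM : ∀ x y, L (h x) (yval y) ≤ M)
    (α : ℝ) (hα : 1 < α) :
    expLoss L yval DT h ≤
      (renyi α DT D * expLoss L yval D h) ^ ((α - 1) / α) * M ^ (α⁻¹) := by
  have hα0 : (0:ℝ) < α := lt_trans one_pos hα
  have hα1 : (0:ℝ) < α - 1 := by linarith
  have hMnn : 0 ≤ M := le_trans (hLnonneg (h (Classical.arbitrary X))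
    (yval (Classical.arbitrary Y))) (hM _ _)
  set l : X × Y → ℝ := fun z => L (h z.1) (yval z.2) with hl
  have hlnn : ∀ z, 0 ≤ l z := fun z => hLnonneg _ _
  set f : X × Y → ℝ := fun z => (DT z.1 z.2 ^ α / D z.1 z.2 ^ (α - 1) * l z) ^ α⁻¹ with hf
  set g : X × Y → ℝ := fun z => (D z.1 z.2 * l z) ^ ((α - 1) / α) with hg
  have hfnn : ∀ z, 0 ≤ f z := fun z => rpow_nonneg
    (mul_nonneg (div_nonneg (rpow_nonneg (hDTnonneg _ _) _) (rpow_nonneg (hDnonneg _ _) _))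
      (hlnn z)) _
  have hgnn : ∀ z, 0 ≤ g z := fun z => rpow_nonneg (mul_nonneg (hDnonneg _ _) (hlnn z)) _
  have hconj : Real.HolderConjugate α (α / (α - 1)) := Real.HolderConjugate.conjExponent hα
  -- pointwise identity
  have key : ∀ z : X × Y, DT z.1 z.2 * l z = f z * g z := by
    intro z
    rcases eq_or_lt_of_le (hDTnonneg z.1 z.2) with hz | hz
    · simp [hf, ← hz, Real.zero_rpow hα0.ne', zero_div,
        Real.zero_rpow (by positivity : α⁻¹ ≠ 0)]
    · have hD : 0 < D z.1 z.2 := hsupp _ _ hz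
      rcases eq_or_lt_of_le (hlnn z) with hL | hL
      · simp [hf, hg, ← hL, Real.zero_rpow (by positivity : α⁻¹ ≠ 0),
          Real.zero_rpow (by positivity : (α - 1)/α ≠ 0)]
      · have e1 : f z = DT z.1 z.2 / D z.1 z.2 ^ ((α - 1) / α) * l z ^ α⁻¹ := by
          show (DT z.1 z.2 ^ α / D z.1 z.2 ^ (α - 1) * l z) ^ α⁻¹ = _
          rw [Real.mul_rpow (div_nonneg (Real.rpow_nonneg (hDTnonneg _ _) _)
              (Real.rpow_nonneg (hDnonneg _ _) _)) (hlnn z),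
            Real.div_rpow (Real.rpow_nonneg (hDTnonneg _ _) _)
              (Real.rpow_nonneg (hDnonneg _ _) _),
            ← Real.rpow_mul hz.le, ← Real.rpow_mul hD.le,
            mul_inv_cancel₀ hα0.ne', Real.rpow_one, ← div_eq_mul_inv]
        have e2 : g z = D z.1 z.2 ^ ((α - 1) / α) * l z ^ ((α - 1) / α) :=
          Real.mul_rpow hD.le (hlnn z)
        rw [e1, e2]
        have hDp : (0:ℝ) < D z.1 z.2 ^ ((α - 1) / α) := Real.rpow_pos_of_pos hD _
        have hle : l z ^ α⁻¹ * l z ^ ((α - 1) / α) = l z := by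
          rw [← Real.rpow_add hL]
          rw [show α⁻¹ + (α - 1) / α = 1 by field_simp; ring, Real.rpow_one]
        calc DT z.1 z.2 * l z
            = DT z.1 z.2 * (l z ^ α⁻¹ * l z ^ ((α - 1) / α)) := by rw [hle]
          _ = DT z.1 z.2 / D z.1 z.2 ^ ((α - 1) / α) * l z ^ α⁻¹ *
                (D z.1 z.2 ^ ((α - 1) / α) * l z ^ ((α - 1) / α)) := by
              field_simp
  have lhs_eq : expLoss L yval DT h = ∑ z : X × Y, DT z.1 z.2 * l z := by
    rw [expLoss, Fintype.sum_prod_type]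
  have holder := Real.inner_le_Lp_mul_Lq (Finset.univ : Finset (X × Y)) f g hconj
  set S : ℝ := ∑ x, ∑ y, DT x y ^ α / D x y ^ (α - 1) with hS
  have hS' : S = ∑ z : X × Y, DT z.1 z.2 ^ α / D z.1 z.2 ^ (α - 1) := by
    rw [hS, Fintype.sum_prod_type]
  have hSnn : 0 ≤ S := Finset.sum_nonneg fun x _ => Finset.sum_nonneg fun y _ =>
    div_nonneg (rpow_nonneg (hDTnonneg _ _) _) (rpow_nonneg (hDnonneg _ _) _)
  have hELnn : 0 ≤ expLoss L yval D h := Finset.sum_nonneg fun x _ =>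
    Finset.sum_nonneg fun y _ => mul_nonneg (hDnonneg _ _) (hLnonneg _ _)
  have hf_pow : ∀ z : X × Y, |f z| ^ α = DT z.1 z.2 ^ α / D z.1 z.2 ^ (α - 1) * l z := by
    intro z
    rw [abs_of_nonneg (hfnn z)]
    show ((DT z.1 z.2 ^ α / D z.1 z.2 ^ (α - 1) * l z) ^ α⁻¹) ^ α = _
    rw [← Real.rpow_mul
      (mul_nonneg (div_nonneg (rpow_nonneg (hDTnonneg _ _) _) (rpow_nonneg (hDnonneg _ _) _))
        (hlnn z)), inv_mul_cancel₀ hα0.ne', Real.rpow_one]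
  have hg_pow : ∀ z : X × Y, |g z| ^ (α / (α - 1)) = D z.1 z.2 * l z := by
    intro z
    rw [abs_of_nonneg (hgnn z)]
    show ((D z.1 z.2 * l z) ^ ((α - 1) / α)) ^ (α / (α - 1)) = _
    rw [← Real.rpow_mul (mul_nonneg (hDnonneg _ _) (hlnn z)),
      show (α - 1) / α * (α / (α - 1)) = 1 by field_simp, Real.rpow_one]
  have sum_f : ∑ z : X × Y, |f z| ^ α ≤ M * S := by
    calc ∑ z : X × Y, |f z| ^ α
        ≤ ∑ z : X × Y, DT z.1 z.2 ^ α / D z.1 z.2 ^ (α - 1) * M :=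
          Finset.sum_le_sum fun z _ => by
            rw [hf_pow z]
            exact mul_le_mul_of_nonneg_left (hM _ _)
              (div_nonneg (rpow_nonneg (hDTnonneg _ _) _) (rpow_nonneg (hDnonneg _ _) _))
      _ = M * S := by rw [← Finset.sum_mul, ← hS', mul_comm]
  have sum_g : ∑ z : X × Y, |g z| ^ (α / (α - 1)) = expLoss L yval D h := by
    rw [show expLoss L yval D h = ∑ z : X × Y, D z.1 z.2 * l z from by
      rw [expLoss, Fintype.sum_prod_type]]
    exact Finset.sum_congr rfl fun z _ => hg_pow z
  have sum_f_nn : 0 ≤ ∑ z : X × Y, |f z| ^ α :=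
    Finset.sum_nonneg fun z _ => Real.rpow_nonneg (abs_nonneg _) _
  have step1 : (∑ z : X × Y, |f z| ^ α) ^ (1 / α) ≤ (M * S) ^ (1 / α) :=
    Real.rpow_le_rpow sum_f_nn sum_f (by positivity)
  have step : expLoss L yval DT h ≤ (M * S) ^ (1 / α) * (expLoss L yval D h) ^ ((α - 1) / α) := by
    rw [lhs_eq]
    calc ∑ z : X × Y, DT z.1 z.2 * l z = ∑ z : X × Y, f z * g z :=
          Finset.sum_congr rfl fun z _ => key z
      _ ≤ (∑ z : X × Y, |f z| ^ α) ^ (1 / α) *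
            (∑ z : X × Y, |g z| ^ (α / (α - 1))) ^ (1 / (α / (α - 1))) := holder
      _ ≤ (M * S) ^ (1 / α) * (expLoss L yval D h) ^ ((α - 1) / α) := by
          rw [sum_g, show 1 / (α / (α - 1)) = (α - 1) / α from by field_simp]
          exact mul_le_mul_of_nonneg_right step1 (Real.rpow_nonneg hELnn _)
  refine le_trans step (le_of_eq ?_)
  have hrenyi : renyi α DT D = S ^ (α - 1)⁻¹ := rfl
  rw [hrenyi, Real.mul_rpow (Real.rpow_nonneg hSnn _) hELnn,
    ← Real.rpow_mul hSnn, Real.mul_rpow hMnn hSnn,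
    show (α - 1)⁻¹ * ((α - 1) / α) = 1 / α from by field_simp, one_div]
  ring
end

section
/- Assume all source domains share the same conditional distribution of labels, 𝓛(D_k, h_k) ≤ ε for each k, and (1/p) Σ_{k=1}^p Σ_{(x,y)} D_k(y|x) 𝒰(x) L(h_k(x), y) ≤ M. Then for every z ∈ Δ and η > 0, the self-weighted loss satisfies 𝓛(D_z, h_z^η) = Σ_{k=1}^p z_k 𝓛(D_k, h_z^η) ≤ ε + η M. -/
open Finset Real

/-- Self-weighted loss bound: under shared conditionals, per-domain loss at most `ε`,
and average uniform loss at most `M`, for every `z ∈ Δ` and `η > 0`,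
`𝓛(D_z, h_z^η) = Σ_k z_k 𝓛(D_k, h_z^η) ≤ ε + η M`. -/
theorem stmt8
    {X Y : Type*} [Fintype X] [Nonempty X] [Fintype Y] [Nonempty Y]
    {p : ℕ} (hp : 0 < p)
    (D : Fin p → X → Y → ℝ)
    (hDnonneg : ∀ k x y, 0 ≤ D k x y)
    (hDsum : ∀ k, ∑ x, ∑ y, D k x y = 1)
    (h : Fin p → X → ℝ) (yval : Y → ℝ)
    (L : ℝ → ℝ → ℝ)
    (hLnonneg : ∀ a b, 0 ≤ L a b)
    (hLconv : ∀ b, ConvexOn ℝ Set.univ fun a => L a b)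
    (hLcont : Continuous fun q : ℝ × ℝ => L q.1 q.2)
    -- shared conditional distribution of labels
    (Q : X → Y → ℝ)
    (hQnonneg : ∀ x y, 0 ≤ Q x y)
    (hQsum : ∀ x, ∑ y, Q x y = 1)
    (hshared : ∀ k x y, D k x y = marginal (D k) x * Q x y)
    (ε M : ℝ)
    (hε : ∀ k, expLoss L yval (D k) (h k) ≤ ε)
    (hM : (1 / (p : ℝ)) * ∑ k : Fin p, ∑ x, ∑ y, Q x y * unif X * L (h k x) (yval y) ≤ M) :
    ∀ z ∈ stdSimplex ℝ (Fin p), ∀ η > (0 : ℝ),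
      expLoss L yval (fun x y => ∑ k, z k * D k x y) (combRule D h η z) =
          ∑ k, z k * expLoss L yval (D k) (combRule D h η z) ∧
        expLoss L yval (fun x y => ∑ k, z k * D k x y) (combRule D h η z) ≤
          ε + η * M := by
  intro z hz η hη
  obtain ⟨hznn, hzsum⟩ := hz
  have hpR : (0:ℝ) < p := by exact_mod_cast hp
  have hu : (0:ℝ) < unif X := by
    rw [unif]
    have : (0:ℝ) < (Fintype.card X : ℝ) := by exact_mod_cast Fintype.card_pos
    positivity
  set g := combRule D h η z with hg
  have hDx : ∀ k x, 0 ≤ marginal (D k) x := fun k x =>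
    Finset.sum_nonneg fun y _ => hDnonneg k x y
  have hS : ∀ x, 0 ≤ ∑ j, z j * marginal (D j) x := fun x =>
    Finset.sum_nonneg fun j _ => mul_nonneg (hznn j) (hDx j x)
  have hden : ∀ x, 0 < (∑ j, z j * marginal (D j) x) + η * unif X := fun x =>
    add_pos_of_nonneg_of_pos (hS x) (mul_pos hη hu)
  -- equality part
  have heq : expLoss L yval (fun x y => ∑ k, z k * D k x y) g
      = ∑ k, z k * expLoss L yval (D k) g := by
    simp only [expLoss, Finset.mul_sum]
    conv_rhs => rw [Finset.sum_comm]
    refine Finset.sum_congr rfl fun x _ => ?_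
    conv_rhs => rw [Finset.sum_comm]
    refine Finset.sum_congr rfl fun y _ => ?_
    rw [Finset.sum_mul]
    exact Finset.sum_congr rfl fun k _ => mul_assoc _ _ _
  refine ⟨heq, ?_⟩
  -- weights
  set w : Fin p → X → ℝ := fun k x =>
    (z k * marginal (D k) x + η * unif X / (p : ℝ)) /
      ((∑ j, z j * marginal (D j) x) + η * unif X) with hw
  have hwnn : ∀ k x, 0 ≤ w k x := fun k x =>
    div_nonneg (add_nonneg (mul_nonneg (hznn k) (hDx k x))
      (div_nonneg (le_of_lt (mul_pos hη hu)) hpR.le)) (hden x).le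
  have hwsum : ∀ x, ∑ k, w k x = 1 := by
    intro x
    rw [hw]
    rw [← Finset.sum_div]
    rw [div_eq_one_iff_eq (hden x).ne']
    rw [Finset.sum_add_distrib]
    congr 1
    rw [Finset.sum_const, Finset.card_univ, Fintype.card_fin, nsmul_eq_mul]
    field_simp
  -- Jensen
  have hjensen : ∀ x y, L (g x) (yval y) ≤ ∑ k, w k x * L (h k x) (yval y) := by
    intro x y
    have := (hLconv (yval y)).map_sum_le (t := Finset.univ) (w := fun k => w k x)
      (p := fun k => h k x) (fun k _ => hwnn k x) (hwsum x) (fun k _ => Set.mem_univ _)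
    simpa [hg, combRule, smul_eq_mul] using this
  -- pointwise bound
  have key : ∀ x y, (∑ k, z k * D k x y) * L (g x) (yval y)
      ≤ ∑ k, (z k * marginal (D k) x + η * unif X / (p : ℝ)) *
          (Q x y * L (h k x) (yval y)) := by
    intro x y
    have hDz : (∑ k, z k * D k x y) = (∑ k, z k * marginal (D k) x) * Q x y := by
      rw [Finset.sum_mul]
      exact Finset.sum_congr rfl fun k _ => by rw [hshared k x y]; ring
    rw [hDz]
    set S := ∑ j, z j * marginal (D j) x with hSdef
    calc S * Q x y * L (g x) (yval y)
        ≤ S * Q x y * ∑ k, w k x * L (h k x) (yval y) := by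
          exact mul_le_mul_of_nonneg_left (hjensen x y)
            (mul_nonneg (hS x) (hQnonneg x y))
      _ = ∑ k, (S / (S + η * unif X)) *
            ((z k * marginal (D k) x + η * unif X / (p : ℝ)) *
              (Q x y * L (h k x) (yval y))) := by
          rw [Finset.mul_sum]
          refine Finset.sum_congr rfl fun k _ => ?_
          rw [hw]
          field_simp
          ring
      _ ≤ ∑ k, 1 * ((z k * marginal (D k) x + η * unif X / (p : ℝ)) *
            (Q x y * L (h k x) (yval y))) := by
          refine Finset.sum_le_sum fun k _ => ?_
          refine mul_le_mul_of_nonneg_right ?_ ?_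
          · rw [div_le_one (hden x)]
            exact le_add_of_nonneg_right (mul_pos hη hu).le
          · exact mul_nonneg (add_nonneg (mul_nonneg (hznn k) (hDx k x))
              (div_nonneg (mul_pos hη hu).le hpR.le))
              (mul_nonneg (hQnonneg x y) (hLnonneg _ _))
      _ = ∑ k, (z k * marginal (D k) x + η * unif X / (p : ℝ)) *
            (Q x y * L (h k x) (yval y)) := by simp
  -- sum up
  have hsplit : ∀ k, ∑ x, ∑ y, (z k * marginal (D k) x + η * unif X / (p : ℝ)) *
        (Q x y * L (h k x) (yval y))
      = z k * expLoss L yval (D k) (h k) +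
        η * ((1 / (p : ℝ)) * ∑ x, ∑ y, Q x y * unif X * L (h k x) (yval y)) := by
    intro k
    rw [expLoss, Finset.mul_sum, Finset.mul_sum, Finset.mul_sum, ← Finset.sum_add_distrib]
    refine Finset.sum_congr rfl fun x _ => ?_
    rw [Finset.mul_sum, Finset.mul_sum, Finset.mul_sum, ← Finset.sum_add_distrib]
    refine Finset.sum_congr rfl fun y _ => ?_
    rw [hshared k x y]
    field_simp
  calc expLoss L yval (fun x y => ∑ k, z k * D k x y) g
      ≤ ∑ x, ∑ y, ∑ k, (z k * marginal (D k) x + η * unif X / (p : ℝ)) *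
          (Q x y * L (h k x) (yval y)) := by
        refine Finset.sum_le_sum fun x _ => Finset.sum_le_sum fun y _ => key x y
    _ = ∑ k, ∑ x, ∑ y, (z k * marginal (D k) x + η * unif X / (p : ℝ)) *
          (Q x y * L (h k x) (yval y)) := by
        conv_rhs => rw [Finset.sum_comm]
        exact Finset.sum_congr rfl fun x _ => Finset.sum_comm
    _ = ∑ k, z k * expLoss L yval (D k) (h k) +
        η * ((1 / (p : ℝ)) * ∑ k : Fin p, ∑ x, ∑ y, Q x y * unif X * L (h k x) (yval y)) := by
        rw [Finset.mul_sum, Finset.mul_sum, ← Finset.sum_add_distrib]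
        exact Finset.sum_congr rfl fun k _ => hsplit k
    _ ≤ ε + η * M := by
        gcongr
        · calc ∑ k, z k * expLoss L yval (D k) (h k)
              ≤ ∑ k, z k * ε := Finset.sum_le_sum fun k _ =>
                mul_le_mul_of_nonneg_left (hε k) (hznn k)
            _ = ε := by rw [← Finset.sum_mul, hzsum, one_mul]
end

section
/- Fix α > 1 and k ∈ [p]. Assume 𝓛(D_k, h_k) ≤ ε and L(h_k(x),y) ≤ M for all (x,y), and let D̂_k be any probability distribution on 𝒳 × 𝒴 with D_k(x,y) > 0 wherever D̂_k(x,y) > 0. Then 𝓛(D̂_k, h_k) ≤ [ε · d_α(D̂_k ∥ D_k)]^{(α−1)/α} · M^{1/α}. -/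
open Finset Real

/-- Key step for estimate distributions: if `𝓛(D_k, h_k) ≤ ε`, `L(h_k(x), y) ≤ M`, and
`D_k > 0` on the support of `D̂_k`, then
`𝓛(D̂_k, h_k) ≤ [ε d_α(D̂_k ∥ D_k)]^{(α−1)/α} M^{1/α}`. -/
theorem stmt10
    {X Y : Type*} [Fintype X] [Nonempty X] [Fintype Y] [Nonempty Y]
    (α : ℝ) (hα : 1 < α)
    (Dk : X → Y → ℝ)
    (hDknonneg : ∀ x y, 0 ≤ Dk x y)
    (hDksum : ∑ x, ∑ y, Dk x y = 1)
    (Dhat : X → Y → ℝ)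
    (hDhatnonneg : ∀ x y, 0 ≤ Dhat x y)
    (hDhatsum : ∑ x, ∑ y, Dhat x y = 1)
    (hsupp : ∀ x y, 0 < Dhat x y → 0 < Dk x y)
    (hk : X → ℝ) (yval : Y → ℝ)
    (L : ℝ → ℝ → ℝ)
    (hLnonneg : ∀ a b, 0 ≤ L a b)
    (ε M : ℝ)
    (hε : expLoss L yval Dk hk ≤ ε)
    (hM : ∀ x y, L (hk x) (yval y) ≤ M) :
    expLoss L yval Dhat hk ≤ (ε * renyi α Dhat Dk) ^ ((α - 1) / α) * M ^ (α⁻¹) := by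
  have hα0 : (0:ℝ) < α := lt_trans one_pos hα
  have hα1 : (0:ℝ) < α - 1 := sub_pos.2 hα
  set c : ℝ := (α - 1) / α with hc
  set q : ℝ := α / (α - 1) with hq
  have hpq : α.HolderConjugate q := Real.HolderConjugate.conjExponent hα
  have hc0 : 0 ≤ c := by positivity
  have hq0 : 0 < q := by positivity
  have hcα : c * α = α - 1 := by rw [hc]; field_simp
  have hcq : c * q = 1 := by rw [hc, hq]; field_simp
  obtain ⟨x0⟩ := ‹Nonempty X›
  obtain ⟨y0⟩ := ‹Nonempty Y›
  have hM0 : 0 ≤ M := le_trans (hLnonneg _ _) (hM x0 y0)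
  have hε0 : 0 ≤ ε := le_trans (Finset.sum_nonneg fun x _ =>
    Finset.sum_nonneg fun y _ => mul_nonneg (hDknonneg x y) (hLnonneg _ _)) hε
  have hzero : ∀ x y, Dk x y = 0 → Dhat x y = 0 := by
    intro x y h
    by_contra hne
    have h1 : 0 < Dhat x y := lt_of_le_of_ne (hDhatnonneg x y) (Ne.symm hne)
    exact absurd (hsupp x y h1) (by rw [h]; exact lt_irrefl 0)
  set f : X × Y → ℝ := fun i => Dhat i.1 i.2 / Dk i.1 i.2 ^ c with hf
  set g : X × Y → ℝ := fun i => Dk i.1 i.2 ^ c * L (hk i.1) (yval i.2) with hg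
  have hfnn : ∀ i, 0 ≤ f i := fun i =>
    div_nonneg (hDhatnonneg _ _) (Real.rpow_nonneg (hDknonneg _ _) _)
  have hgnn : ∀ i, 0 ≤ g i :=
    fun i => mul_nonneg (Real.rpow_nonneg (hDknonneg _ _) _) (hLnonneg _ _)
  have key : ∀ i : X × Y, f i * g i = Dhat i.1 i.2 * L (hk i.1) (yval i.2) := by
    rintro ⟨x, y⟩
    by_cases h : Dk x y = 0
    · show Dhat x y / Dk x y ^ c * (Dk x y ^ c * L (hk x) (yval y)) = _
      rw [hzero x y h]; ring
    · have hpos : 0 < Dk x y := lt_of_le_of_ne (hDknonneg x y) (Ne.symm h)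
      have hne : Dk x y ^ c ≠ 0 := (Real.rpow_pos_of_pos hpos c).ne'
      show Dhat x y / Dk x y ^ c * (Dk x y ^ c * L (hk x) (yval y)) = _
      field_simp [hf, hg]
  -- sum of f^α
  have hfα : ∀ i : X × Y, |f i| ^ α = Dhat i.1 i.2 ^ α / Dk i.1 i.2 ^ (α - 1) := by
    rintro ⟨x, y⟩
    rw [abs_of_nonneg (hfnn _)]
    show (Dhat x y / Dk x y ^ c) ^ α = _
    rw [Real.div_rpow (hDhatnonneg _ _) (Real.rpow_nonneg (hDknonneg _ _) _),
      ← Real.rpow_mul (hDknonneg _ _), hcα]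
  set S : ℝ := ∑ x, ∑ y, Dhat x y ^ α / Dk x y ^ (α - 1) with hS
  have hS0 : 0 ≤ S :=
    Finset.sum_nonneg fun x _ => Finset.sum_nonneg fun y _ =>
      div_nonneg (Real.rpow_nonneg (hDhatnonneg _ _) _) (Real.rpow_nonneg (hDknonneg _ _) _)
  have hsumf : ∑ i : X × Y, |f i| ^ α = S :=
    calc ∑ i : X × Y, |f i| ^ α
        = ∑ i : X × Y, Dhat i.1 i.2 ^ α / Dk i.1 i.2 ^ (α - 1) :=
          Finset.sum_congr rfl fun i _ => hfα i
      _ = S := by rw [Fintype.sum_prod_type]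
  -- sum of g^q
  have hgq : ∀ i : X × Y, |g i| ^ q ≤ Dk i.1 i.2 * (L (hk i.1) (yval i.2) * M ^ (α - 1)⁻¹) := by
    rintro ⟨x, y⟩
    rw [abs_of_nonneg (hgnn _)]
    show (Dk x y ^ c * L (hk x) (yval y)) ^ q ≤ _
    rw [Real.mul_rpow (Real.rpow_nonneg (hDknonneg _ _) _) (hLnonneg _ _),
      ← Real.rpow_mul (hDknonneg _ _), hcq, Real.rpow_one]
    refine mul_le_mul_of_nonneg_left ?_ (hDknonneg x y)
    by_cases hL : L (hk x) (yval y) = 0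
    · rw [hL, Real.zero_rpow hq0.ne']
      positivity
    · have hLpos : 0 < L (hk x) (yval y) := lt_of_le_of_ne (hLnonneg _ _) (Ne.symm hL)
      have hq1 : q = 1 + (α - 1)⁻¹ := by rw [hq]; field_simp; ring
      rw [hq1, Real.rpow_add hLpos, Real.rpow_one]
      exact mul_le_mul_of_nonneg_left
        (Real.rpow_le_rpow (hLnonneg _ _) (hM x y) (by positivity)) (hLnonneg _ _)
  have hsumg : ∑ i : X × Y, |g i| ^ q ≤ M ^ (α - 1)⁻¹ * ε := by
    calc ∑ i : X × Y, |g i| ^ q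
        ≤ ∑ i : X × Y, Dk i.1 i.2 * (L (hk i.1) (yval i.2) * M ^ (α - 1)⁻¹) :=
          Finset.sum_le_sum fun i _ => hgq i
      _ = M ^ (α - 1)⁻¹ * ∑ x, ∑ y, Dk x y * L (hk x) (yval y) := by
          rw [Fintype.sum_prod_type, Finset.mul_sum]
          refine Finset.sum_congr rfl fun x _ => ?_
          rw [Finset.mul_sum]
          exact Finset.sum_congr rfl fun y _ => by ring
      _ ≤ M ^ (α - 1)⁻¹ * ε := by
          have hε' : (∑ x, ∑ y, Dk x y * L (hk x) (yval y)) ≤ ε := hε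
          exact mul_le_mul_of_nonneg_left hε' (by positivity)
  -- Hölder
  have holder := Real.inner_le_Lp_mul_Lq (Finset.univ : Finset (X × Y)) f g hpq
  have hLHS : expLoss L yval Dhat hk = ∑ i : X × Y, f i * g i :=
    calc expLoss L yval Dhat hk
        = ∑ i : X × Y, Dhat i.1 i.2 * L (hk i.1) (yval i.2) := by rw [Fintype.sum_prod_type]; rfl
      _ = ∑ i : X × Y, f i * g i := (Finset.sum_congr rfl fun i _ => key i).symm
  have step2 : (∑ i : X × Y, |g i| ^ q) ^ (1 / q) ≤ (M ^ (α - 1)⁻¹ * ε) ^ (1 / q) :=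
    Real.rpow_le_rpow (Finset.sum_nonneg fun i _ => Real.rpow_nonneg (abs_nonneg _) _)
      hsumg (by positivity)
  have heq2 : (M ^ (α - 1)⁻¹ * ε) ^ (1 / q) = M ^ α⁻¹ * ε ^ c := by
    rw [Real.mul_rpow (by positivity) hε0, ← Real.rpow_mul hM0]
    congr 2
    · rw [hq]; field_simp
    · rw [hc, hq]; field_simp
  have heq1 : (∑ i : X × Y, |f i| ^ α) ^ (1 / α) = S ^ α⁻¹ := by
    rw [hsumf, one_div]
  calc expLoss L yval Dhat hk = ∑ i : X × Y, f i * g i := hLHS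
    _ ≤ (∑ i : X × Y, |f i| ^ α) ^ (1 / α) * (∑ i : X × Y, |g i| ^ q) ^ (1 / q) := holder
    _ ≤ S ^ α⁻¹ * (M ^ (α - 1)⁻¹ * ε) ^ (1 / q) := by
        rw [heq1]
        refine mul_le_mul_of_nonneg_left step2 (by positivity)
    _ = S ^ α⁻¹ * (M ^ α⁻¹ * ε ^ c) := by rw [heq2]
    _ = (ε * renyi α Dhat Dk) ^ ((α - 1) / α) * M ^ α⁻¹ := by
        simp only [renyi, ← hS]
        rw [Real.mul_rpow hε0 (Real.rpow_nonneg hS0 _),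
          ← Real.rpow_mul hS0, ← hc]
        rw [show (α - 1)⁻¹ * c = α⁻¹ by rw [hc]; field_simp]
        ring
end
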